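/- Every maximum stable set of a tree T on at least 2 vertices contains at least one pendant vertex of T. -/
import Mathlib


open Finset SimpleGraph
open scoped Classical

variable {V : Type*}

/-- A stable (independent) set of vertices. -/
def stableSet (G : SimpleGraph V) (S : Finset V) : Prop :=
  ∀ u ∈ S, ∀ w ∈ S, ¬ G.Adj u w

/-- A maximum stable set. -/
def maxStableSet [Fintype V] (G : SimpleGraph V) (S : Finset V) : Prop :=
  stableSet G S ∧ ∀ S' : Finset V, stableSet G S' → S'.card ≤ S.card

/-- The independence number α(G). -/
noncomputable def alphaNum [Fintype V] (G : SimpleGraph V) : ℕ :=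
  ((Finset.univ : Finset V).powerset.filter (fun S => stableSet G S)).sup Finset.card

/-- core(G): the intersection of all maximum stable sets of G. -/
noncomputable def coreSet [Fintype V] (G : SimpleGraph V) : Finset V :=
  Finset.univ.filter (fun v => ∀ S : Finset V, maxStableSet G S → v ∈ S)

/-- A pendant vertex: a vertex with exactly one neighbor. -/
def pendant (G : SimpleGraph V) (v : V) : Prop :=
  ∃! w, G.Adj v w

/-- {A, B} is a bipartition of G into color classes. -/
def isBipartition [Fintype V] (G : SimpleGraph V) (A B : Finset V) : Prop :=
  Disjoint A B ∧ A ∪ B = Finset.univ ∧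
    ∀ u v, G.Adj u v → (u ∈ A ∧ v ∈ B) ∨ (u ∈ B ∧ v ∈ A)

/-- In a tree, adjacent vertices have different distances from any root. -/
lemma tree_dist_ne_of_adj {V : Type*} (T : SimpleGraph V) (hT : T.IsTree)
    (r u v : V) (huv : T.Adj u v) : T.dist r u ≠ T.dist r v := by
  intro heq
  obtain ⟨p, hpp, hp⟩ := hT.isConnected.exists_path_of_dist r u
  -- v is not in the support of the shortest path p
  have hvns : v ∉ p.support := by
    intro hv
    have h1 : (p.takeUntil v hv).length ≤ p.length := p.length_takeUntil_le hv
    have h2 : T.dist r v ≤ (p.takeUntil v hv).length := SimpleGraph.dist_le _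
    have hsum : (p.takeUntil v hv).length + (p.dropUntil v hv).length = p.length := by
      have := p.take_spec hv
      calc (p.takeUntil v hv).length + (p.dropUntil v hv).length
          = ((p.takeUntil v hv).append (p.dropUntil v hv)).length := by
            rw [SimpleGraph.Walk.length_append]
        _ = p.length := by rw [this]
    have h3 : (p.dropUntil v hv).length = 0 := by omega
    have : v = u := (p.dropUntil v hv).eq_of_length_eq_zero h3
    exact huv.ne this.symm
  -- so p extended by the edge u-v is a path from r to v
  have hq : (p.concat huv).IsPath := by
    rw [← SimpleGraph.Walk.isPath_reverse_iff, SimpleGraph.Walk.reverse_concat]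
    exact (hpp.reverse).cons (by rwa [SimpleGraph.Walk.support_reverse, List.mem_reverse])
  obtain ⟨q, hqp, hqlen⟩ := hT.isConnected.exists_path_of_dist r v
  have huniq := hT.IsAcyclic.path_unique ⟨p.concat huv, hq⟩ ⟨q, hqp⟩
  have hlen : (p.concat huv).length = q.length := by
    have := congrArg (fun x => x.1.length) huniq
    simpa using this
  rw [SimpleGraph.Walk.length_concat, hp, hqlen, heq] at hlen
  omega

theorem stmt3 [Fintype V] (T : SimpleGraph V) (hT : T.IsTree)
    (hn : 2 ≤ Fintype.card V) (S : Finset V) (hS : maxStableSet T S) :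
    ∃ v ∈ S, pendant T v := by
  by_contra hcon
  push_neg at hcon
  have hconn := hT.isConnected
  have hne : Nonempty V := Fintype.card_pos_iff.mp (by omega)
  obtain ⟨r⟩ := hne
  -- Step 1: adjacent vertices have distances from r of different parity
  have hpar : ∀ u v, T.Adj u v → (T.dist r u % 2 ≠ T.dist r v % 2) := by
    intro u v huv
    have hne' := tree_dist_ne_of_adj T hT r u v huv
    have h1 : T.dist r v ≤ T.dist r u + 1 := by
      have := hconn.dist_triangle (u := r) (v := u) (w := v)
      rwa [SimpleGraph.dist_eq_one_iff_adj.mpr huv] at this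
    have h2 : T.dist r u ≤ T.dist r v + 1 := by
      have := hconn.dist_triangle (u := r) (v := v) (w := u)
      rwa [SimpleGraph.dist_eq_one_iff_adj.mpr huv.symm] at this
    omega
  -- Step 2: the parity classes are stable sets partitioning V.
  set A : Finset V := Finset.univ.filter (fun v => T.dist r v % 2 = 0) with hA
  set B : Finset V := Finset.univ.filter (fun v => T.dist r v % 2 = 1) with hB
  have hAstable : stableSet T A := by
    intro u hu w hw huw
    simp only [hA, Finset.mem_filter] at hu hw
    exact hpar u w huw (by omega)
  have hBstable : stableSet T B := by
    intro u hu w hw huw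
    simp only [hB, Finset.mem_filter] at hu hw
    exact hpar u w huw (by omega)
  have hABcard : A.card + B.card = Fintype.card V := by
    rw [← Finset.card_union_of_disjoint]
    · congr 1
      apply Finset.eq_univ_iff_forall.mpr
      intro v
      simp only [Finset.mem_union, hA, hB, Finset.mem_filter, Finset.mem_univ, true_and]
      omega
    · rw [Finset.disjoint_left]
      intro v hv hv'
      simp only [hA, hB, Finset.mem_filter] at hv hv'
      omega
  have hcardA := hS.2 A hAstable
  have hcardB := hS.2 B hBstable
  -- hence 2|S| ≥ n
  have hbig : Fintype.card V ≤ 2 * S.card := by omega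
  -- Step 3: every vertex of S has degree ≥ 2
  have hdeg : ∀ s ∈ S, 2 ≤ T.degree s := by
    intro s hsS
    obtain ⟨t, hts⟩ := Fintype.exists_ne_of_one_lt_card (by omega) s
    obtain ⟨w⟩ := hconn.preconnected s t
    have hadj : ∃ x, T.Adj s x := by
      cases w with
      | nil => exact absurd rfl hts.symm
      | cons h _ => exact ⟨_, h⟩
    obtain ⟨x, hx⟩ := hadj
    have hnp : ¬ pendant T s := hcon s hsS
    have hy : ∃ y, T.Adj s y ∧ y ≠ x := by
      by_contra h
      push_neg at h
      exact hnp ⟨x, hx, fun y hy => h y hy⟩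
    obtain ⟨y, hy⟩ := hy
    rw [← SimpleGraph.card_neighborFinset_eq_degree]
    apply Finset.one_lt_card_iff.mpr
    exact ⟨y, x, by simp [SimpleGraph.mem_neighborFinset, hy.1, hx], by simp
      [SimpleGraph.mem_neighborFinset, hy.1, hx], hy.2⟩
  -- Step 4: count edges incident to S
  have hdisj : (S : Set V).Pairwise (fun s t =>
      Disjoint (T.incidenceFinset s) (T.incidenceFinset t)) := by
    intro s hs t ht hst
    rw [Finset.disjoint_left]
    intro e hes het
    rw [SimpleGraph.mem_incidenceFinset] at hes het
    have heq : e = s(s, t) := (Sym2.mem_and_mem_iff hst).mp ⟨hes.2, het.2⟩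
    have : T.Adj s t := by
      have := hes.1
      rw [heq] at this
      exact this
    exact hS.1 s hs t ht this
  have hcount : ∑ s ∈ S, T.degree s = (S.biUnion (fun s => T.incidenceFinset s)).card := by
    rw [Finset.card_biUnion (fun s hs t ht hst => hdisj hs ht hst)]
    exact Finset.sum_congr rfl (fun s _ => (T.card_incidenceFinset_eq_degree s).symm)
  have hsub : S.biUnion (fun s => T.incidenceFinset s) ⊆ T.edgeFinset := by
    intro e he
    rw [Finset.mem_biUnion] at he
    obtain ⟨s, _, hes⟩ := he
    rw [SimpleGraph.mem_incidenceFinset] at hes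
    rw [SimpleGraph.mem_edgeFinset]
    exact hes.1
  have hlow : 2 * S.card ≤ T.edgeFinset.card := by
    calc 2 * S.card = ∑ _s ∈ S, 2 := by rw [Finset.sum_const]; ring
      _ ≤ ∑ s ∈ S, T.degree s := Finset.sum_le_sum hdeg
      _ = (S.biUnion (fun s => T.incidenceFinset s)).card := hcount
      _ ≤ T.edgeFinset.card := Finset.card_le_card hsub
  have hE := hT.card_edgeFinset
  omega
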